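/- For every sequence of tuning parameters η_n > 0 and every sequence a_n of nonnegative real numbers, with E_{S,n} = [θ̃_S − σ̂ a_n, θ̃_S + σ̂ a_n] and C_{S,n} = [θ̂_S − a_n, θ̂_S + a_n], one has inf_{θ∈ℝ} P_{n,θ}(θ ∈ E_{S,n}) − inf_{θ∈ℝ} P_{n,θ}(θ ∈ C_{S,n}) → 0 as n → ∞. -/

import Mathlib

open MeasureTheory ProbabilityTheory Filter
open scoped NNReal

/-- Standard normal cumulative distribution function Φ. -/
noncomputable def stdNormCDF (x : ℝ) : ℝ :=
  ((gaussianReal 0 1) (Set.Iic x)).toReal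

/-- Soft-thresholding (LASSO) estimator with threshold η, as a function of ȳ. -/
noncomputable def softThresh (η y : ℝ) : ℝ := Real.sign y * max (|y| - η) 0

/-- Hard-thresholding estimator with threshold η, as a function of ȳ. -/
noncomputable def hardThresh (η y : ℝ) : ℝ := if η < |y| then y else 0

/-- Adaptive LASSO estimator with tuning parameter η, as a function of ȳ. -/
noncomputable def adaLasso (η y : ℝ) : ℝ := if |y| ≤ η then 0 else y - η ^ 2 / y

/-- Coverage probability `P_{n,θ}(θ ∈ [est(ȳ) - a, est(ȳ) + b])` in the
known-variance case (σ = 1), where ȳ ~ N(θ, 1/n). -/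
noncomputable def cover (n : ℕ) (est : ℝ → ℝ) (a b θ : ℝ) : ℝ :=
  ((gaussianReal θ ((n : ℝ≥0))⁻¹)
    {y : ℝ | est y - a ≤ θ ∧ θ ≤ est y + b}).toReal

/-- The distribution of `σ̂ = sqrt(Q/(n-1))` where `Q ~ χ²_{n-1}`; i.e. the law of the
square root of a chi-square random variable with `n-1` degrees of freedom divided by
`n - 1` (whose density is `h_n`). The chi-square distribution with `k` degrees of
freedom is the Gamma distribution with shape `k/2` and rate `1/2`. -/
noncomputable def sigmaHatLaw (n : ℕ) : Measure ℝ :=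
  (gammaMeasure (((n : ℝ) - 1) / 2) (1 / 2)).map
    (fun q => Real.sqrt (q / ((n : ℝ) - 1)))

/-- The cumulative distribution function `T_{n-1}` of the Student t-distribution with
`n-1` degrees of freedom, via `T_{n-1}(x) = ∫₀^∞ Φ(s x) h_n(s) ds`. -/
noncomputable def studentCDF (n : ℕ) (x : ℝ) : ℝ :=
  ∫ s, stdNormCDF (s * x) ∂(sigmaHatLaw n)

/-- Coverage probability `P_{n,θ}(θ ∈ [est(σ̂, ȳ) - σ̂ a, est(σ̂, ȳ) + σ̂ a])` in the
unknown-variance case (true σ = 1): `ȳ ~ N(θ, 1/n)` and `σ̂` (independent of `ȳ`) has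
law `sigmaHatLaw n`; here `est s y` is the feasible estimator computed from `ȳ = y` and
`σ̂ = s`. -/
noncomputable def coverUV (n : ℕ) (est : ℝ → ℝ → ℝ) (a θ : ℝ) : ℝ :=
  (((gaussianReal θ ((n : ℝ≥0))⁻¹).prod (sigmaHatLaw n))
    {p : ℝ × ℝ | est p.2 p.1 - p.2 * a ≤ θ ∧ θ ≤ est p.2 p.1 + p.2 * a}).toReal
open Set Real
open scoped ENNReal

namespace SoftProof

noncomputable abbrev nu : Measure ℝ := gaussianReal 0 1

instance : NullSingletonClass nu :=
  ⟨fun x => (gaussianReal_absolutelyContinuous 0 one_ne_zero) (Real.volume_singleton)⟩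

lemma Phi_nonneg (x : ℝ) : 0 ≤ stdNormCDF x := ENNReal.toReal_nonneg

lemma Phi_le_one (x : ℝ) : stdNormCDF x ≤ 1 := by
  have h := prob_le_one (μ := nu) (s := Set.Iic x)
  simpa [stdNormCDF] using ENNReal.toReal_mono ENNReal.one_ne_top h

lemma Phi_mono : Monotone stdNormCDF := fun x y h =>
  ENNReal.toReal_mono (measure_ne_top _ _) (measure_mono (Iic_subset_Iic.2 h))

lemma Phi_measurable : Measurable stdNormCDF := Phi_mono.measurable

lemma nu_Ioc {x y : ℝ} (h : x ≤ y) :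
    (nu (Set.Ioc x y)).toReal = stdNormCDF y - stdNormCDF x := by
  rw [← Set.Iic_sdiff_Iic,
    measure_diff (Iic_subset_Iic.2 h) measurableSet_Iic.nullMeasurableSet (measure_ne_top _ _),
    ENNReal.toReal_sub_of_le (measure_mono (Iic_subset_Iic.2 h)) (measure_ne_top _ _)]
  rfl

lemma nu_Icc {x y : ℝ} (h : x ≤ y) :
    (nu (Set.Icc x y)).toReal = stdNormCDF y - stdNormCDF x := by
  rw [← nu_Ioc h]
  exact congrArg ENNReal.toReal (measure_congr (Ioc_ae_eq_Icc (μ := nu))).symm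

lemma Phi_symm (x : ℝ) : stdNormCDF (-x) = 1 - stdNormCDF x := by
  have hmap : nu.map (fun y => (-1 : ℝ) * y) = nu := by
    have h : (NNReal.mk ((-1:ℝ)^2) (sq_nonneg _) : ℝ≥0) * 1 = 1 := by
      ext; norm_num
    rw [gaussianReal_map_const_mul, h]
    norm_num
  have h1 : nu (Set.Iic (-x)) = nu (Set.Ici x) := by
    conv_lhs => rw [← hmap]
    rw [Measure.map_apply (measurable_const_mul _) measurableSet_Iic]
    congr 1
    ext y
    simp only [Set.mem_preimage, Set.mem_Iic, Set.mem_Ici]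
    constructor <;> intro <;> linarith
  have h2 : nu (Set.Ici x) = nu (Set.Ioi x) :=
    (measure_congr (Ioi_ae_eq_Ici (μ := nu))).symm
  have h3 : Set.Ioi x = (Set.Iic x)ᶜ := by simp
  rw [stdNormCDF, h1, h2, h3, prob_compl_eq_one_sub measurableSet_Iic,
    ENNReal.toReal_sub_of_le prob_le_one ENNReal.one_ne_top, ENNReal.toReal_one]
  rfl

lemma abs_Phi_sub (x y : ℝ) :
    |stdNormCDF x - stdNormCDF y| = (nu (Set.Ioc (min x y) (max x y))).toReal := by
  rcases le_total x y with h | h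
  · rw [min_eq_left h, max_eq_right h, nu_Ioc h, abs_sub_comm,
      abs_of_nonneg (by linarith [Phi_mono h])]
  · rw [min_eq_right h, max_eq_left h, nu_Ioc h, abs_of_nonneg (by linarith [Phi_mono h])]

lemma aux_exp (u : ℝ) : |u| * rexp (-u ^ 2 / 8) ≤ √(2 * π) := by
  have h2 : (2 : ℝ) ≤ √(2 * π) := by
    rw [Real.le_sqrt' (by norm_num)]
    nlinarith [Real.two_le_pi]
  have h1 : 1 + u ^ 2 / 8 ≤ rexp (u ^ 2 / 8) := Real.add_one_le_exp _ |>.trans_eq' (by ring_nf)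
  have h3 : |u| ≤ √(2 * π) * rexp (u ^ 2 / 8) := by
    nlinarith [sq_abs u, abs_nonneg u, Real.exp_pos (u ^ 2 / 8), sq_nonneg (|u| - 2)]
  have h4 : rexp (-u ^ 2 / 8) = (rexp (u ^ 2 / 8))⁻¹ := by
    rw [← Real.exp_neg]; ring_nf
  rw [h4]
  rw [mul_inv_le_iff₀ (Real.exp_pos _)]
  exact h3

lemma abs_Phi_mul_sub {s : ℝ} (hs : 0 ≤ s) (u : ℝ) :
    |stdNormCDF (s * u) - stdNormCDF u| ≤ 2 * |s - 1| := by
  rcases lt_or_ge s (1/2) with hs2 | hs2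
  · have hb1 : |stdNormCDF (s * u) - stdNormCDF u| ≤ 1 := by
      rw [abs_sub_le_iff]
      constructor <;> linarith [Phi_nonneg (s*u), Phi_le_one (s*u), Phi_nonneg u, Phi_le_one u]
    have : |s - 1| = -(s - 1) := abs_of_nonpos (by linarith)
    linarith
  · set m := min (s * u) u with hm
    set M := max (s * u) u with hM
    have hmM : m ≤ M := min_le_max
    have key : ∀ t, m ≤ t → t ≤ M → u ^ 2 / 4 ≤ t ^ 2 := by
      intro t h1 h2
      rcases le_total 0 u with hu | hu
      · have : u / 2 ≤ m := le_min (by nlinarith) (by linarith)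
        nlinarith
      · have : M ≤ u / 2 := max_le (by nlinarith) (by linarith)
        nlinarith
    have hC : (0:ℝ) < (√(2 * π))⁻¹ := by
      rw [inv_pos]
      exact Real.sqrt_pos.2 (by positivity)
    have hbound : nu (Set.Ioc m M)
        ≤ ENNReal.ofReal ((M - m) * ((√(2 * π))⁻¹ * rexp (-u ^ 2 / 8))) := by
      rw [gaussianReal_apply 0 one_ne_zero]
      calc ∫⁻ t in Set.Ioc m M, gaussianPDF 0 1 t
          ≤ ∫⁻ _ in Set.Ioc m M, ENNReal.ofReal ((√(2 * π))⁻¹ * rexp (-u ^ 2 / 8)) := by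
            refine setLIntegral_mono measurable_const fun t ht => ?_
            rw [gaussianPDF, ENNReal.ofReal_le_ofReal_iff (by positivity)]
            rw [gaussianPDFReal]
            push_cast
            have ht2 : u ^ 2 / 4 ≤ t ^ 2 := key t ht.1.le ht.2
            have : rexp (-(t - 0) ^ 2 / (2 * 1)) ≤ rexp (-u ^ 2 / 8) :=
              Real.exp_le_exp.2 (by nlinarith)
            have hsq : (√(2 * π * 1))⁻¹ = (√(2 * π))⁻¹ := by norm_num
            rw [hsq]
            exact mul_le_mul_of_nonneg_left this hC.le
        _ = ENNReal.ofReal ((√(2 * π))⁻¹ * rexp (-u ^ 2 / 8)) * volume (Set.Ioc m M) := by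
            rw [setLIntegral_const]
        _ = ENNReal.ofReal ((M - m) * ((√(2 * π))⁻¹ * rexp (-u ^ 2 / 8))) := by
            rw [Real.volume_Ioc, ← ENNReal.ofReal_mul (by positivity), mul_comm]
    have h1 : |stdNormCDF (s * u) - stdNormCDF u| ≤ (M - m) * ((√(2 * π))⁻¹ * rexp (-u ^ 2 / 8)) := by
      rw [abs_Phi_sub]
      refine ENNReal.toReal_le_of_le_ofReal ?_ hbound
      exact mul_nonneg (sub_nonneg.2 hmM) (mul_nonneg hC.le (Real.exp_pos _).le)
    have hMm : M - m = |u| * |s - 1| := by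
      rcases le_total (s * u) u with h | h
      · have he : u - s * u = |u * (1 - s)| := by
          rw [abs_of_nonneg (by linarith : (0:ℝ) ≤ u * (1 - s))]; ring
        rw [hM, hm, max_eq_right h, min_eq_left h, he, abs_mul, abs_sub_comm 1 s]
      · have he : s * u - u = |u * (s - 1)| := by
          rw [abs_of_nonneg (by linarith : (0:ℝ) ≤ u * (s - 1))]; ring
        rw [hM, hm, max_eq_left h, min_eq_right h, he, abs_mul]
    have h6 : (0:ℝ) < √(2 * π) := Real.sqrt_pos.2 (by positivity)
    have h7 : √(2 * π) * (√(2 * π))⁻¹ = 1 := mul_inv_cancel₀ h6.ne'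
    have h5 := aux_exp u
    have h8 : (0:ℝ) < rexp (-u ^ 2 / 8) := Real.exp_pos _
    have h9 : (0:ℝ) ≤ |s - 1| := abs_nonneg _
    calc |stdNormCDF (s * u) - stdNormCDF u|
        ≤ (M - m) * ((√(2 * π))⁻¹ * rexp (-u ^ 2 / 8)) := h1
      _ = |s - 1| * ((|u| * rexp (-u ^ 2 / 8)) * (√(2 * π))⁻¹) := by rw [hMm]; ring
      _ ≤ |s - 1| * (√(2 * π) * (√(2 * π))⁻¹) := by
          refine mul_le_mul_of_nonneg_left ?_ h9
          exact mul_le_mul_of_nonneg_right h5 (inv_nonneg.2 h6.le)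
      _ = |s - 1| := by rw [h7, mul_one]
      _ ≤ 2 * |s - 1| := by linarith

/-! ### Soft thresholding -/

lemma softThresh_le {c t y : ℝ} (hc : 0 < c) :
    softThresh c y ≤ t ↔ y ≤ t + (if 0 ≤ t then c else -c) := by
  rcases lt_trichotomy y 0 with hy | hy | hy
  · rw [softThresh, Real.sign_of_neg hy, abs_of_neg hy]
    rcases le_or_gt (-y - c) 0 with h | h
    · rw [max_eq_right h]
      split_ifs with ht <;> constructor <;> intro h2 <;> nlinarith
    · rw [max_eq_left h.le]
      split_ifs with ht <;> constructor <;> intro h2 <;> nlinarith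
  · subst hy
    simp only [softThresh, Real.sign_zero, zero_mul]
    split_ifs with ht <;> constructor <;> intro h2 <;> nlinarith
  · rw [softThresh, Real.sign_of_pos hy, abs_of_pos hy]
    rcases le_or_gt (y - c) 0 with h | h
    · rw [max_eq_right h]
      split_ifs with ht <;> constructor <;> intro h2 <;> nlinarith
    · rw [max_eq_left h.le]
      split_ifs with ht <;> constructor <;> intro h2 <;> nlinarith

lemma le_softThresh {c t y : ℝ} (hc : 0 < c) :
    t ≤ softThresh c y ↔ t + (if 0 < t then c else -c) ≤ y := by
  rcases lt_trichotomy y 0 with hy | hy | hy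
  · rw [softThresh, Real.sign_of_neg hy, abs_of_neg hy]
    rcases le_or_gt (-y - c) 0 with h | h
    · rw [max_eq_right h]
      split_ifs with ht <;> constructor <;> intro h2 <;> nlinarith
    · rw [max_eq_left h.le]
      split_ifs with ht <;> constructor <;> intro h2 <;> nlinarith
  · subst hy
    simp only [softThresh, Real.sign_zero, zero_mul]
    split_ifs with ht <;> constructor <;> intro h2 <;> nlinarith
  · rw [softThresh, Real.sign_of_pos hy, abs_of_pos hy]
    rcases le_or_gt (y - c) 0 with h | h
    · rw [max_eq_right h]
      split_ifs with ht <;> constructor <;> intro h2 <;> nlinarith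
    · rw [max_eq_left h.le]
      split_ifs with ht <;> constructor <;> intro h2 <;> nlinarith

/-- lower endpoint of the coverage event -/
noncomputable def Lpt (c r θ : ℝ) : ℝ := θ - r + (if 0 < θ - r then c else -c)
/-- upper endpoint of the coverage event -/
noncomputable def Upt (c r θ : ℝ) : ℝ := θ + r + (if 0 ≤ θ + r then c else -c)

lemma Lpt_le_Upt {c r : ℝ} (hc : 0 < c) (hr : 0 ≤ r) (θ : ℝ) : Lpt c r θ ≤ Upt c r θ := by
  rw [Lpt, Upt]
  split_ifs <;> linarith

lemma event_eq {c r : ℝ} (hc : 0 < c) (θ : ℝ) :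
    {y : ℝ | softThresh c y - r ≤ θ ∧ θ ≤ softThresh c y + r}
      = Set.Icc (Lpt c r θ) (Upt c r θ) := by
  ext y
  simp only [Set.mem_setOf_eq, Set.mem_Icc, Lpt, Upt]
  have h1 : softThresh c y - r ≤ θ ↔ softThresh c y ≤ θ + r := by constructor <;> intro <;> linarith
  have h2 : θ ≤ softThresh c y + r ↔ θ - r ≤ softThresh c y := by constructor <;> intro <;> linarith
  rw [h1, h2, softThresh_le hc, le_softThresh hc, and_comm]

/-! ### Gaussian interval probabilities -/

lemma gauss_Icc {n : ℕ} (hn : 1 ≤ n) (θ L U : ℝ) (hLU : L ≤ U) :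
    ((gaussianReal θ ((n : ℝ≥0))⁻¹) (Set.Icc L U)).toReal
      = stdNormCDF (Real.sqrt n * (U - θ)) - stdNormCDF (Real.sqrt n * (L - θ)) := by
  have hn0 : (0:ℝ) < n := by exact_mod_cast hn
  set s : ℝ := Real.sqrt n with hsdef
  have hs : 0 < s := Real.sqrt_pos.2 hn0
  have hmap : nu.map (fun x => s⁻¹ * x + θ) = gaussianReal θ ((n : ℝ≥0))⁻¹ := by
    have h1 : nu.map (fun x => s⁻¹ * x) = gaussianReal 0 ((n : ℝ≥0))⁻¹ := by
      rw [gaussianReal_map_const_mul]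
      congr 1
      · ring
      · ext
        push_cast
        rw [show (s⁻¹)^2 = (s^2)⁻¹ by rw [inv_pow], hsdef, Real.sq_sqrt hn0.le]
        simp
    have h2 : (fun x : ℝ => s⁻¹ * x + θ) = (fun x => x + θ) ∘ (fun x => s⁻¹ * x) := rfl
    rw [h2, ← Measure.map_map (measurable_add_const θ) (measurable_const_mul _), h1,
      gaussianReal_map_add_const, zero_add]
  rw [← hmap, Measure.map_apply (by fun_prop : Measurable fun x : ℝ => s⁻¹ * x + θ) measurableSet_Icc]
  have key1 : ∀ z x : ℝ, s * z ≤ x ↔ z ≤ s⁻¹ * x := by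
    intro z x
    rw [mul_comm s z, ← le_div_iff₀ hs, div_eq_inv_mul]
  have key2 : ∀ x z : ℝ, x ≤ s * z ↔ s⁻¹ * x ≤ z := by
    intro x z
    rw [mul_comm s z, ← div_le_iff₀ hs, div_eq_inv_mul]
  have hpre : (fun x => s⁻¹ * x + θ) ⁻¹' (Set.Icc L U)
      = Set.Icc (s * (L - θ)) (s * (U - θ)) := by
    ext x
    simp only [Set.mem_preimage, Set.mem_Icc]
    rw [← sub_le_iff_le_add, ← le_sub_iff_add_le, ← key1, ← key2, and_comm]
  rw [hpre, nu_Icc (by nlinarith)]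

/-! ### The coverage function in closed form -/

/-- `W n c r θ` : coverage probability of `[est - r, est + r]` for soft thresholding
with threshold `c`, when `ȳ ~ N(θ, 1/n)`. -/
noncomputable def W (n : ℕ) (c r θ : ℝ) : ℝ :=
  stdNormCDF (Real.sqrt n * (r + (if 0 ≤ θ + r then c else -c)))
    - stdNormCDF (Real.sqrt n * (-r + (if 0 < θ - r then c else -c)))

/-- the infimal value of `W` over `θ` -/
noncomputable def Fval (n : ℕ) (c r : ℝ) : ℝ :=
  stdNormCDF (Real.sqrt n * (r + c)) - stdNormCDF (Real.sqrt n * (-r + c))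

lemma cover_eval {n : ℕ} (hn : 1 ≤ n) {c r : ℝ} (hc : 0 < c) (hr : 0 ≤ r) (θ : ℝ) :
    ((gaussianReal θ ((n : ℝ≥0))⁻¹)
      {y : ℝ | softThresh c y - r ≤ θ ∧ θ ≤ softThresh c y + r}).toReal = W n c r θ := by
  rw [event_eq hc θ, gauss_Icc hn θ _ _ (Lpt_le_Upt hc hr θ), W, Lpt, Upt]
  congr 2 <;> ring_nf

lemma W_nonneg {n : ℕ} {c r : ℝ} (hc : 0 < c) (hr : 0 ≤ r) (θ : ℝ) : 0 ≤ W n c r θ := by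
  rw [W]
  have := Real.sqrt_nonneg (n : ℝ)
  refine sub_nonneg.2 (Phi_mono ?_)
  have h : -r + (if 0 < θ - r then c else -c) ≤ r + (if 0 ≤ θ + r then c else -c) := by
    split_ifs <;> linarith
  nlinarith

lemma W_abs_le_one {n : ℕ} (c r θ : ℝ) : |W n c r θ| ≤ 1 := by
  rw [W, abs_sub_le_iff]
  constructor <;>
    linarith [Phi_nonneg (Real.sqrt n * (r + (if 0 ≤ θ + r then c else -c))),
      Phi_le_one (Real.sqrt n * (r + (if 0 ≤ θ + r then c else -c))),
      Phi_nonneg (Real.sqrt n * (-r + (if 0 < θ - r then c else -c))),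
      Phi_le_one (Real.sqrt n * (-r + (if 0 < θ - r then c else -c)))]

lemma Fval_le_W {n : ℕ} {c r : ℝ} (hc : 0 < c) (hr : 0 ≤ r) (θ : ℝ) :
    Fval n c r ≤ W n c r θ := by
  have hs := Real.sqrt_nonneg (n : ℝ)
  rw [Fval, W]
  split_ifs with h1 h2 h2
  · exact le_refl _
  · have : stdNormCDF (Real.sqrt n * (-r + -c)) ≤ stdNormCDF (Real.sqrt n * (-r + c)) :=
      Phi_mono (by nlinarith)
    linarith
  · exact absurd (by linarith : (0:ℝ) ≤ θ + r) h1
  · have e1 : Real.sqrt n * (r + -c) = -(Real.sqrt n * (-r + c)) := by ring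
    have e2 : Real.sqrt n * (-r + -c) = -(Real.sqrt n * (r + c)) := by ring
    rw [e1, e2, Phi_symm, Phi_symm]
    linarith

lemma W_eq_of_large {n : ℕ} {c r θ : ℝ} (hr : 0 ≤ r) (hθ : r < θ) :
    W n c r θ = Fval n c r := by
  rw [W, Fval, if_pos (by linarith), if_pos (by linarith)]

/-! ### Infimum of coverage, known variance -/

lemma cover_inf {n : ℕ} (hn : 1 ≤ n) {e a : ℝ} (he : 0 < e) (ha : 0 ≤ a) :
    (⨅ θ : ℝ, cover n (softThresh e) a a θ) = Fval n e a := by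
  have hcov : ∀ θ, cover n (softThresh e) a a θ = W n e a θ := fun θ => cover_eval hn he ha θ
  have hbdd : BddBelow (Set.range fun θ => cover n (softThresh e) a a θ) := by
    refine ⟨Fval n e a, ?_⟩
    rintro x ⟨θ, rfl⟩
    exact le_of_le_of_eq (Fval_le_W he ha θ) (hcov θ).symm
  refine le_antisymm ?_ ?_
  · refine (ciInf_le hbdd (a + 1)).trans_eq ?_
    show cover n (softThresh e) a a (a + 1) = Fval n e a
    rw [hcov, W_eq_of_large ha (by linarith)]
  · exact le_ciInf fun θ => (Fval_le_W he ha θ).trans_eq (hcov θ).symm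

/-! ### The unknown-variance case -/

lemma measurable_sign : Measurable Real.sign := by
  have h : Real.sign = fun r : ℝ => if r < 0 then (-1:ℝ) else if 0 < r then 1 else 0 :=
    funext fun r => rfl
  rw [h]
  exact Measurable.ite (measurableSet_lt measurable_id measurable_const) measurable_const
    (Measurable.ite (measurableSet_lt measurable_const measurable_id) measurable_const
      measurable_const)

lemma measurable_sigmaHatMap (n : ℕ) : Measurable fun q : ℝ => Real.sqrt (q / ((n : ℝ) - 1)) :=
  Real.continuous_sqrt.measurable.comp (measurable_id.div_const _)

lemma sigmaHat_prob {n : ℕ} (hn : 2 ≤ n) : IsProbabilityMeasure (sigmaHatLaw n) := by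
  have hm : (0:ℝ) < ((n:ℝ) - 1) / 2 := by
    have : (2:ℝ) ≤ n := by exact_mod_cast hn
    linarith
  have h : IsProbabilityMeasure (gammaMeasure (((n:ℝ) - 1)/2) (1/2)) :=
    isProbabilityMeasure_gammaMeasure hm (by norm_num)
  exact Measure.isProbabilityMeasure_map (measurable_sigmaHatMap n).aemeasurable

lemma sigmaHat_ae_pos {n : ℕ} (hn : 2 ≤ n) : ∀ᵐ s ∂(sigmaHatLaw n), 0 < s := by
  have hm : (0:ℝ) < (n:ℝ) - 1 := by
    have : (2:ℝ) ≤ n := by exact_mod_cast hn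
    linarith
  rw [ae_iff]
  have hset : {s : ℝ | ¬ 0 < s} = Set.Iic 0 := by ext x; simp [not_lt]
  rw [hset, sigmaHatLaw, Measure.map_apply (measurable_sigmaHatMap n) measurableSet_Iic]
  have hpre : (fun q : ℝ => Real.sqrt (q / ((n : ℝ) - 1))) ⁻¹' Set.Iic 0 = Set.Iic 0 := by
    ext q
    simp only [Set.mem_preimage, Set.mem_Iic]
    constructor
    · intro h
      have h0 : q / ((n : ℝ) - 1) ≤ 0 :=
        Real.sqrt_eq_zero'.1 (le_antisymm h (Real.sqrt_nonneg _))
      by_contra hq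
      push_neg at hq
      nlinarith [div_pos hq hm]
    · intro h
      rw [Real.sqrt_eq_zero'.2 (div_nonpos_of_nonpos_of_nonneg h hm.le)]
  rw [hpre, gammaMeasure, withDensity_apply _ measurableSet_Iic,
    setLIntegral_congr (Iio_ae_eq_Iic (a := (0:ℝ))).symm]
  exact lintegral_gammaPDF_of_nonpos le_rfl

lemma W_measurable (n : ℕ) (e a θ : ℝ) : Measurable fun s => W n (s * e) (s * a) θ := by
  have h1 : Measurable fun s : ℝ =>
      Real.sqrt n * (s * a + (if 0 ≤ θ + s * a then s * e else -(s * e))) := by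
    refine measurable_const.mul ?_
    refine (measurable_id.mul_const a).add (Measurable.ite ?_ (measurable_id.mul_const e)
      (measurable_id.mul_const e).neg)
    exact measurableSet_le measurable_const (measurable_const.add (measurable_id.mul_const a))
  have h2 : Measurable fun s : ℝ =>
      Real.sqrt n * (-(s * a) + (if 0 < θ - s * a then s * e else -(s * e))) := by
    refine measurable_const.mul ?_
    refine (measurable_id.mul_const a).neg.add (Measurable.ite ?_ (measurable_id.mul_const e)
      (measurable_id.mul_const e).neg)
    exact measurableSet_lt measurable_const (measurable_const.sub (measurable_id.mul_const a))
  exact (Phi_measurable.comp h1).sub (Phi_measurable.comp h2)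

lemma Fval_measurable (n : ℕ) (e a : ℝ) : Measurable fun s => Fval n (s * e) (s * a) := by
  have h1 : Measurable fun s : ℝ => Real.sqrt n * (s * a + s * e) :=
    measurable_const.mul ((measurable_id.mul_const a).add (measurable_id.mul_const e))
  have h2 : Measurable fun s : ℝ => Real.sqrt n * (-(s * a) + s * e) :=
    measurable_const.mul ((measurable_id.mul_const a).neg.add (measurable_id.mul_const e))
  exact (Phi_measurable.comp h1).sub (Phi_measurable.comp h2)

lemma Fval_abs_le_one (n : ℕ) (c r : ℝ) : |Fval n c r| ≤ 1 := by
  rw [Fval, abs_sub_le_iff]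
  constructor <;>
    linarith [Phi_nonneg (Real.sqrt n * (r + c)), Phi_le_one (Real.sqrt n * (r + c)),
      Phi_nonneg (Real.sqrt n * (-r + c)), Phi_le_one (Real.sqrt n * (-r + c))]

lemma integrable_W {n : ℕ} (hn : 2 ≤ n) (e a θ : ℝ) :
    Integrable (fun s => W n (s * e) (s * a) θ) (sigmaHatLaw n) := by
  have := sigmaHat_prob hn
  refine (integrable_const (1:ℝ)).mono' (W_measurable n e a θ).aestronglyMeasurable
    (ae_of_all _ fun s => ?_)
  simpa [Real.norm_eq_abs] using W_abs_le_one (n := n) (s * e) (s * a) θ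

lemma integrable_Fval {n : ℕ} (hn : 2 ≤ n) (e a : ℝ) :
    Integrable (fun s => Fval n (s * e) (s * a)) (sigmaHatLaw n) := by
  have := sigmaHat_prob hn
  refine (integrable_const (1:ℝ)).mono' (Fval_measurable n e a).aestronglyMeasurable
    (ae_of_all _ fun s => ?_)
  simpa [Real.norm_eq_abs] using Fval_abs_le_one n (s * e) (s * a)

lemma coverUV_eval {n : ℕ} (hn : 2 ≤ n) {e a : ℝ} (he : 0 < e) (ha : 0 ≤ a) (θ : ℝ) :
    coverUV n (fun s y => softThresh (s * e) y) a θ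
      = ∫ s, W n (s * e) (s * a) θ ∂(sigmaHatLaw n) := by
  have hP := sigmaHat_prob hn
  set μθ := gaussianReal θ ((n : ℝ≥0))⁻¹ with hμθ
  set S : Set (ℝ × ℝ) := {p : ℝ × ℝ | softThresh (p.2 * e) p.1 - p.2 * a ≤ θ ∧
      θ ≤ softThresh (p.2 * e) p.1 + p.2 * a} with hS
  have hsoft : Measurable fun p : ℝ × ℝ => softThresh (p.2 * e) p.1 := by
    have : (fun p : ℝ × ℝ => softThresh (p.2 * e) p.1)
        = fun p : ℝ × ℝ => Real.sign p.1 * max (|p.1| - p.2 * e) 0 := rfl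
    rw [this]
    exact (measurable_sign.comp measurable_fst).mul
      ((measurable_fst.abs.sub (measurable_snd.mul_const e)).max measurable_const)
  have hSm : MeasurableSet S :=
    (measurableSet_le (hsoft.sub (measurable_snd.mul_const a)) measurable_const).inter
      (measurableSet_le measurable_const (hsoft.add (measurable_snd.mul_const a)))
  have key : coverUV n (fun s y => softThresh (s * e) y) a θ
      = (∫⁻ s, μθ ((fun y => (y, s)) ⁻¹' S) ∂(sigmaHatLaw n)).toReal := by
    rw [coverUV, Measure.prod_apply_symm hSm]
  rw [key, ← integral_toReal (measurable_measure_prodMk_right hSm).aemeasurable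
    (ae_of_all _ fun s => measure_lt_top _ _)]
  refine integral_congr_ae ?_
  filter_upwards [sigmaHat_ae_pos hn] with s hs
  have hslice : (fun y => (y, s)) ⁻¹' S
      = {y : ℝ | softThresh (s * e) y - s * a ≤ θ ∧ θ ≤ softThresh (s * e) y + s * a} := rfl
  rw [hslice]
  exact cover_eval (by omega) (mul_pos hs he) (mul_nonneg hs.le ha) θ

lemma coverUV_ge {n : ℕ} (hn : 2 ≤ n) {e a : ℝ} (he : 0 < e) (ha : 0 ≤ a) (θ : ℝ) :
    ∫ s, Fval n (s * e) (s * a) ∂(sigmaHatLaw n)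
      ≤ coverUV n (fun s y => softThresh (s * e) y) a θ := by
  rw [coverUV_eval hn he ha θ]
  refine integral_mono_ae (integrable_Fval hn e a) (integrable_W hn e a θ) ?_
  filter_upwards [sigmaHat_ae_pos hn] with s hs
  exact Fval_le_W (mul_pos hs he) (mul_nonneg hs.le ha) θ

lemma coverUV_tendsto {n : ℕ} (hn : 2 ≤ n) {e a : ℝ} (he : 0 < e) (ha : 0 ≤ a) :
    Tendsto (fun θ => coverUV n (fun s y => softThresh (s * e) y) a θ) atTop
      (nhds (∫ s, Fval n (s * e) (s * a) ∂(sigmaHatLaw n))) := by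
  have hP := sigmaHat_prob hn
  have heq : (fun θ => coverUV n (fun s y => softThresh (s * e) y) a θ)
      = fun θ => ∫ s, W n (s * e) (s * a) θ ∂(sigmaHatLaw n) :=
    funext fun θ => coverUV_eval hn he ha θ
  rw [heq]
  refine tendsto_integral_filter_of_dominated_convergence (fun _ => (1:ℝ))
    (Eventually.of_forall fun θ => (W_measurable n e a θ).aestronglyMeasurable)
    (Eventually.of_forall fun θ => ae_of_all _ fun s => ?_) (integrable_const 1) ?_
  · simpa [Real.norm_eq_abs] using W_abs_le_one (n := n) (s * e) (s * a) θ
  · filter_upwards [sigmaHat_ae_pos hn] with s hs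
    exact Tendsto.congr' ((eventually_gt_atTop (s * a)).mono fun θ hθ =>
      (W_eq_of_large (mul_nonneg hs.le ha) hθ).symm) tendsto_const_nhds

lemma coverUV_inf {n : ℕ} (hn : 2 ≤ n) {e a : ℝ} (he : 0 < e) (ha : 0 ≤ a) :
    (⨅ θ : ℝ, coverUV n (fun s y => softThresh (s * e) y) a θ)
      = ∫ s, Fval n (s * e) (s * a) ∂(sigmaHatLaw n) := by
  have hbdd : BddBelow (Set.range fun θ => coverUV n (fun s y => softThresh (s * e) y) a θ) := by
    refine ⟨0, ?_⟩
    rintro x ⟨θ, rfl⟩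
    show (0:ℝ) ≤ coverUV n (fun s y => softThresh (s * e) y) a θ
    rw [coverUV]
    exact ENNReal.toReal_nonneg
  refine le_antisymm ?_ (le_ciInf (coverUV_ge hn he ha))
  exact ge_of_tendsto (coverUV_tendsto hn he ha)
    (Eventually.of_forall fun θ => ciInf_le hbdd θ)

/-! ### Gamma moments -/

lemma integrableOn_momentFn {p r : ℝ} (hp : 0 < p) (hr : 0 < r) :
    IntegrableOn (fun x : ℝ => x ^ (p - 1) * rexp (-(r * x))) (Set.Ioi 0) := by
  have h0 := Real.GammaIntegral_convergent hp
  have h1 : IntegrableOn (fun x : ℝ => rexp (-(r * x)) * (r * x) ^ (p - 1)) (Set.Ioi 0) := by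
    have := (integrableOn_Ioi_comp_mul_left_iff
      (fun x : ℝ => rexp (-x) * x ^ (p - 1)) 0 hr).2 (by simpa using h0)
    simpa using this
  have h2 := h1.const_mul (r ^ (1 - p))
  refine IntegrableOn.congr_fun h2 (fun x hx => ?_) measurableSet_Ioi
  have hx0 : (0:ℝ) < x := hx
  rw [Real.mul_rpow hr.le hx0.le]
  rw [show r ^ (1-p) * (rexp (-(r * x)) * (r ^ (p-1) * x ^ (p-1)))
      = (r ^ (1-p) * r ^ (p-1)) * (x ^ (p-1) * rexp (-(r*x))) by ring,
    ← Real.rpow_add hr, show (1:ℝ) - p + (p-1) = 0 by ring, Real.rpow_zero, one_mul]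

lemma gamma_pow {a r : ℝ} (ha : 0 < a) (hr : 0 < r) (k : ℕ) (hk : 1 ≤ k) :
    Integrable (fun x : ℝ => x ^ k) (gammaMeasure a r) ∧
      ∫ x, x ^ k ∂(gammaMeasure a r)
        = Real.Gamma (a + k) / (Real.Gamma a * r ^ (k:ℝ)) := by
  have hΓ : (0:ℝ) < Real.Gamma a := Real.Gamma_pos_of_pos ha
  have hak : (0:ℝ) < a + k := by positivity
  set g : ℝ → ℝ := fun x => x ^ k * gammaPDFReal a r x with hg
  have hgIoi : ∀ x ∈ Set.Ioi (0:ℝ),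
      g x = (r ^ a / Real.Gamma a) * (x ^ (a + k - 1) * rexp (-(r * x))) := by
    intro x hx
    have hx0 : (0:ℝ) < x := hx
    show x ^ k * gammaPDFReal a r x = _
    simp only [gammaPDFReal, if_pos hx0.le]
    rw [← Real.rpow_natCast x k,
      show (a + (k:ℝ) - 1 : ℝ) = (a - 1) + (k:ℝ) by ring, Real.rpow_add hx0]
    ring
  have hzero : ∀ x, x ∉ Set.Ioi (0:ℝ) → g x = 0 := by
    intro x hx
    rw [Set.mem_Ioi, not_lt] at hx
    rcases lt_or_eq_of_le hx with h | h
    · show x ^ k * gammaPDFReal a r x = 0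
      simp only [gammaPDFReal, if_neg (not_le.2 h), mul_zero]
    · subst h
      show (0:ℝ) ^ k * gammaPDFReal a r 0 = 0
      rw [zero_pow (by omega : k ≠ 0), zero_mul]
  have hgint : IntegrableOn g (Set.Ioi 0) :=
    IntegrableOn.congr_fun ((integrableOn_momentFn hak hr).const_mul (r ^ a / Real.Gamma a))
      (fun x hx => (hgIoi x hx).symm) measurableSet_Ioi
  have hInt : Integrable g := by
    rw [← integrableOn_univ, show (Set.univ : Set ℝ) = Set.Iic 0 ∪ Set.Ioi 0 by
      rw [Set.Iic_union_Ioi], integrableOn_union]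
    exact ⟨IntegrableOn.congr_fun integrableOn_zero
      (fun x hx => (hzero x (by simpa [Set.mem_Ioi, not_lt] using hx)).symm) measurableSet_Iic,
      hgint⟩
  have hInt' : Integrable (fun x : ℝ => x ^ k) (gammaMeasure a r) := by
    rw [gammaMeasure, show (gammaPDF a r) = fun x => ENNReal.ofReal (gammaPDFReal a r x) from rfl,
      integrable_withDensity_iff (measurable_gammaPDFReal a r).ennreal_ofReal
      (ae_of_all _ fun x => ENNReal.ofReal_lt_top)]
    refine hInt.congr (ae_of_all _ fun x => ?_)
    show x ^ k * gammaPDFReal a r x = x ^ k * (ENNReal.ofReal (gammaPDFReal a r x)).toReal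
    rw [ENNReal.toReal_ofReal (gammaPDFReal_nonneg ha hr x)]
  refine ⟨hInt', ?_⟩
  have hint_eq : ∫ x, x ^ k ∂(gammaMeasure a r) = ∫ x, g x := by
    have hd : gammaMeasure a r
        = volume.withDensity (fun x => ((gammaPDFReal a r x).toNNReal : ℝ≥0∞)) := rfl
    rw [hd, integral_withDensity_eq_integral_smul (measurable_gammaPDFReal a r).real_toNNReal]
    refine integral_congr_ae (ae_of_all _ fun x => ?_)
    show (gammaPDFReal a r x).toNNReal • (x ^ k) = x ^ k * gammaPDFReal a r x
    rw [NNReal.smul_def, Real.coe_toNNReal _ (gammaPDFReal_nonneg ha hr x), smul_eq_mul, mul_comm]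
  rw [hint_eq, ← setIntegral_eq_integral_of_forall_compl_eq_zero hzero,
    setIntegral_congr_fun measurableSet_Ioi hgIoi, integral_const_mul,
    show (a + (k:ℝ) - 1 : ℝ) = (a + (k:ℝ)) - 1 by ring,
    Real.integral_rpow_mul_exp_neg_mul_Ioi hak hr]
  rw [Real.div_rpow zero_le_one hr.le, Real.one_rpow, Real.rpow_add hr]
  field_simp

lemma gamma_var {n : ℕ} (hn : 2 ≤ n) :
    Integrable (fun q : ℝ => (q / ((n:ℝ) - 1) - 1) ^ 2)
      (gammaMeasure (((n:ℝ) - 1) / 2) (1 / 2)) ∧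
    ∫ q, (q / ((n:ℝ) - 1) - 1) ^ 2 ∂(gammaMeasure (((n:ℝ) - 1) / 2) (1 / 2))
      = 2 / ((n:ℝ) - 1) := by
  have hm0 : (0:ℝ) < (n:ℝ) - 1 := by
    have : (2:ℝ) ≤ n := by exact_mod_cast hn
    linarith
  set m : ℝ := (n:ℝ) - 1 with hmdef
  have ha : (0:ℝ) < m / 2 := by positivity
  have hΓ : (0:ℝ) < Real.Gamma (m/2) := Real.Gamma_pos_of_pos ha
  have hr2 : (0:ℝ) < 1/2 := one_half_pos
  obtain ⟨hi1, he1⟩ := gamma_pow ha hr2 1 le_rfl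
  obtain ⟨hi2, he2⟩ := gamma_pow ha hr2 2 (by norm_num)
  haveI := isProbabilityMeasure_gammaMeasure ha hr2
  have hΓ1 : Real.Gamma (m/2 + 1) = (m/2) * Real.Gamma (m/2) := Real.Gamma_add_one ha.ne'
  have hΓ2 : Real.Gamma (m/2 + 2) = (m/2 + 1) * ((m/2) * Real.Gamma (m/2)) := by
    rw [show (m/2 + 2 : ℝ) = (m/2 + 1) + 1 by ring, Real.Gamma_add_one (by positivity), hΓ1]
  have hm1 : ∫ q, q ^ 1 ∂(gammaMeasure (m/2) (1/2)) = m := by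
    rw [he1, show (((1:ℕ)):ℝ) = (1:ℝ) by norm_num, Real.rpow_one, hΓ1]
    field_simp
  have hm2 : ∫ q, q ^ 2 ∂(gammaMeasure (m/2) (1/2)) = m * (m + 2) := by
    rw [he2, show (((2:ℕ)):ℝ) = (2:ℝ) by norm_num, show (m/2 + (2:ℝ)) = m/2 + 2 from rfl, hΓ2,
      show ((1:ℝ)/2) ^ (2:ℝ) = 1/4 by
        rw [show (2:ℝ) = ((2:ℕ):ℝ) by norm_num, Real.rpow_natCast]; norm_num]
    field_simp
    ring
  have hfun : (fun q : ℝ => (q/m - 1)^2)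
      = fun q => (1/m^2) * q^2 + ((-2/m) * q^1 + 1) := by
    funext q
    field_simp
    ring
  have hIa : Integrable (fun q : ℝ => (1/m^2) * q^2) (gammaMeasure (m/2) (1/2)) :=
    hi2.const_mul _
  have hIb : Integrable (fun q : ℝ => (-2/m) * q^1 + 1) (gammaMeasure (m/2) (1/2)) :=
    (hi1.const_mul _).add (integrable_const 1)
  constructor
  · rw [hfun]
    exact hIa.add hIb
  · rw [hfun, integral_add hIa hIb, integral_add (hi1.const_mul (-2/m)) (integrable_const 1),
      integral_const_mul, integral_const_mul, hm1, hm2, integral_const]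
    simp only [probReal_univ, smul_eq_mul, one_mul]
    field_simp
    ring

lemma gamma_ae_nonneg {n : ℕ} :
    ∀ᵐ q ∂(gammaMeasure (((n:ℝ) - 1) / 2) (1 / 2)), 0 ≤ q := by
  rw [ae_iff]
  have hset : {q : ℝ | ¬ 0 ≤ q} = Set.Iio 0 := by ext x; simp [not_le]
  rw [hset, gammaMeasure, withDensity_apply _ measurableSet_Iio]
  exact lintegral_gammaPDF_of_nonpos le_rfl

lemma min_continuous : Continuous (fun s : ℝ => min (4 * |s - 1|) 2) :=
  (continuous_const.mul (continuous_id.sub continuous_const).abs).min continuous_const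

lemma min_key {δ : ℝ} (hδ : 0 < δ) {x : ℝ} (hx : 0 ≤ x) :
    min (4 * |Real.sqrt x - 1|) 2 ≤ δ + (16/δ) * (x - 1)^2 := by
  have hs := Real.sqrt_nonneg x
  have h1 : (Real.sqrt x - 1) * (Real.sqrt x + 1) = x - 1 := by
    rw [show (Real.sqrt x - 1) * (Real.sqrt x + 1) = Real.sqrt x ^ 2 - 1 by ring,
      Real.sq_sqrt hx]
  have h2 : |x - 1| = |Real.sqrt x - 1| * (Real.sqrt x + 1) := by
    rw [← h1, abs_mul, abs_of_pos (by positivity : (0:ℝ) < Real.sqrt x + 1)]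
  have ht : |Real.sqrt x - 1| ≤ |x - 1| := by
    nlinarith [abs_nonneg (Real.sqrt x - 1)]
  rcases le_or_gt (4 * |x - 1|) δ with h | h
  · calc min (4 * |Real.sqrt x - 1|) 2 ≤ 4 * |Real.sqrt x - 1| := min_le_left _ _
      _ ≤ 4 * |x - 1| := by linarith
      _ ≤ δ := h
      _ ≤ δ + (16/δ) * (x - 1)^2 := le_add_of_nonneg_right (by positivity)
  · calc min (4 * |Real.sqrt x - 1|) 2 ≤ 4 * |Real.sqrt x - 1| := min_le_left _ _
      _ ≤ 4 * |x - 1| := by linarith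
      _ ≤ δ + (16/δ) * (x - 1)^2 := by
          have hsq : |x-1| * |x-1| = (x-1)^2 := by rw [abs_mul_abs_self]; ring
          have h16 : (16/δ) * (x-1)^2 * δ = 16 * (x-1)^2 := by field_simp
          nlinarith [sq_nonneg (δ - 2 * |x-1|), abs_nonneg (x-1), hδ]

lemma Fval_diff_le {n : ℕ} {e a : ℝ} {s : ℝ} (hs : 0 ≤ s) :
    |Fval n (s*e) (s*a) - Fval n e a| ≤ min (4*|s-1|) 2 := by
  refine le_min ?_ ?_
  · have h1 := abs_Phi_mul_sub hs (Real.sqrt n * (a + e))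
    have h2 := abs_Phi_mul_sub hs (Real.sqrt n * (-a + e))
    have e1 : Real.sqrt n * (s*a + s*e) = s * (Real.sqrt n * (a + e)) := by ring
    have e2 : Real.sqrt n * (-(s*a) + s*e) = s * (Real.sqrt n * (-a + e)) := by ring
    rw [Fval, Fval, e1, e2]
    have h3 : stdNormCDF (s * (Real.sqrt n * (a + e))) - stdNormCDF (s * (Real.sqrt n * (-a + e)))
        - (stdNormCDF (Real.sqrt n * (a + e)) - stdNormCDF (Real.sqrt n * (-a + e)))
        = (stdNormCDF (s * (Real.sqrt n * (a + e))) - stdNormCDF (Real.sqrt n * (a + e)))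
          - (stdNormCDF (s * (Real.sqrt n * (-a + e))) - stdNormCDF (Real.sqrt n * (-a + e))) := by
      ring
    rw [h3]
    calc |_ - _| ≤ |stdNormCDF (s * (Real.sqrt n * (a + e))) - stdNormCDF (Real.sqrt n * (a + e))|
          + |stdNormCDF (s * (Real.sqrt n * (-a + e))) - stdNormCDF (Real.sqrt n * (-a + e))| :=
        abs_sub _ _
      _ ≤ 4 * |s - 1| := by linarith
  · have h1 := Fval_abs_le_one n (s*e) (s*a)
    have h2 := Fval_abs_le_one n e a
    calc |Fval n (s*e) (s*a) - Fval n e a| ≤ |Fval n (s*e) (s*a)| + |Fval n e a| := abs_sub _ _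
      _ ≤ 2 := by linarith

lemma main_bound {n : ℕ} (hn : 2 ≤ n) {e a : ℝ} (he : 0 < e) (ha : 0 ≤ a)
    {δ : ℝ} (hδ : 0 < δ) :
    |(⨅ θ : ℝ, coverUV n (fun s y => softThresh (s * e) y) a θ)
      - (⨅ θ : ℝ, cover n (softThresh e) a a θ)|
    ≤ δ + (16/δ) * (2 / ((n:ℝ) - 1)) := by
  have hP := sigmaHat_prob hn
  have hm0 : (0:ℝ) < (n:ℝ) - 1 := by
    have : (2:ℝ) ≤ n := by exact_mod_cast hn
    linarith
  haveI hPG := isProbabilityMeasure_gammaMeasure (by positivity : (0:ℝ) < ((n:ℝ)-1)/2) one_half_pos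
  rw [coverUV_inf hn he ha, cover_inf (by omega) he ha]
  have hconst : Fval n e a = ∫ _ : ℝ, Fval n e a ∂(sigmaHatLaw n) := by
    rw [integral_const]
    simp [measure_univ]
  rw [hconst, ← integral_sub (integrable_Fval hn e a) (integrable_const _)]
  have hminP : Integrable (fun s : ℝ => min (4*|s-1|) 2) (sigmaHatLaw n) := by
    refine (integrable_const (2:ℝ)).mono' min_continuous.aestronglyMeasurable
      (ae_of_all _ fun s => ?_)
    rw [Real.norm_eq_abs, abs_of_nonneg (le_min (by positivity) (by norm_num))]
    exact min_le_right _ _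
  have step1 : |∫ s, (Fval n (s*e) (s*a) - Fval n e a) ∂(sigmaHatLaw n)|
      ≤ ∫ s, min (4*|s-1|) 2 ∂(sigmaHatLaw n) := by
    have hnorm := norm_integral_le_integral_norm (μ := sigmaHatLaw n)
      (fun s => Fval n (s*e) (s*a) - Fval n e a)
    simp only [Real.norm_eq_abs] at hnorm
    refine hnorm.trans ?_
    refine integral_mono_ae ((integrable_Fval hn e a).sub (integrable_const _)).abs hminP ?_
    filter_upwards [sigmaHat_ae_pos hn] with s hs
    exact Fval_diff_le hs.le
  have step2 : ∫ s, min (4*|s-1|) 2 ∂(sigmaHatLaw n)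
      = ∫ q, min (4*|Real.sqrt (q / ((n:ℝ)-1)) - 1|) 2
          ∂(gammaMeasure (((n:ℝ)-1)/2) (1/2)) := by
    rw [sigmaHatLaw, integral_map (measurable_sigmaHatMap n).aemeasurable
      min_continuous.measurable.aestronglyMeasurable]
  have hGint : Integrable (fun q : ℝ => min (4*|Real.sqrt (q / ((n:ℝ)-1)) - 1|) 2)
      (gammaMeasure (((n:ℝ)-1)/2) (1/2)) := by
    refine (integrable_const (2:ℝ)).mono'
      ((min_continuous.measurable.comp (measurable_sigmaHatMap n)).aestronglyMeasurable)
      (ae_of_all _ fun q => ?_)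
    rw [Real.norm_eq_abs, abs_of_nonneg (le_min (by positivity) (by norm_num))]
    exact min_le_right _ _
  obtain ⟨hvi, hve⟩ := gamma_var hn
  have step3 : ∫ q, min (4*|Real.sqrt (q / ((n:ℝ)-1)) - 1|) 2
        ∂(gammaMeasure (((n:ℝ)-1)/2) (1/2))
      ≤ δ + (16/δ) * (2 / ((n:ℝ) - 1)) := by
    have hRint : Integrable (fun q : ℝ => δ + (16/δ) * (q / ((n:ℝ)-1) - 1)^2)
        (gammaMeasure (((n:ℝ)-1)/2) (1/2)) :=
      (integrable_const δ).add (hvi.const_mul _)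
    have hmono : ∫ q, min (4*|Real.sqrt (q / ((n:ℝ)-1)) - 1|) 2
          ∂(gammaMeasure (((n:ℝ)-1)/2) (1/2))
        ≤ ∫ q, (δ + (16/δ) * (q / ((n:ℝ)-1) - 1)^2) ∂(gammaMeasure (((n:ℝ)-1)/2) (1/2)) := by
      refine integral_mono_ae hGint hRint ?_
      filter_upwards [gamma_ae_nonneg (n := n)] with q hq
      exact min_key hδ (div_nonneg hq hm0.le)
    refine hmono.trans ?_
    rw [integral_add (integrable_const δ) (hvi.const_mul _), integral_const_mul, hve,
      integral_const, probReal_univ, one_smul]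
  calc _ ≤ ∫ s, min (4*|s-1|) 2 ∂(sigmaHatLaw n) := step1
    _ = _ := step2
    _ ≤ _ := step3


end SoftProof

/-- Theorem 2 (soft-thresholding): the infimal coverage probabilities of
`E_{S,n} = [θ̃_S - σ̂ a_n, θ̃_S + σ̂ a_n]` and `C_{S,n} = [θ̂_S - a_n, θ̂_S + a_n]`
are asymptotically equal. -/
theorem stmt_15 (η : ℕ → ℝ) (hη : ∀ n, 0 < η n) (a : ℕ → ℝ) (ha : ∀ n, 0 ≤ a n) :
    Tendsto (fun n : ℕ =>
        (⨅ θ : ℝ, coverUV n (fun s y => softThresh (s * η n) y) (a n) θ) -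
          (⨅ θ : ℝ, cover n (softThresh (η n)) (a n) (a n) θ))
      atTop (nhds 0) := by
  rw [Metric.tendsto_atTop]
  intro ε hε
  refine ⟨max 2 ⌈(128/ε^2 + 2 : ℝ)⌉₊, fun n hn => ?_⟩
  have hn2 : 2 ≤ n := le_trans (le_max_left _ _) hn
  have hnc : ((⌈(128/ε^2 + 2 : ℝ)⌉₊ : ℕ) : ℝ) ≤ (n:ℝ) := by
    exact_mod_cast le_trans (le_max_right _ _) hn
  have hm : 128/ε^2 + 1 ≤ (n:ℝ) - 1 := by
    have h := Nat.le_ceil (128/ε^2 + 2 : ℝ)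
    linarith
  have hm0 : (0:ℝ) < (n:ℝ) - 1 := by
    have : (2:ℝ) ≤ (n:ℝ) := by exact_mod_cast hn2
    linarith
  rw [Real.dist_eq, sub_zero]
  have hb := SoftProof.main_bound hn2 (hη n) (ha n) (half_pos hε)
  refine lt_of_le_of_lt hb ?_
  have e1 : (16/(ε/2)) * (2/((n:ℝ)-1)) = 64/(ε * ((n:ℝ)-1)) := by
    field_simp
    ring
  have e2 : ε^2 * (128/ε^2) = 128 := by field_simp
  have h2 : (16/(ε/2)) * (2/((n:ℝ)-1)) < ε/2 := by
    rw [e1, div_lt_iff₀ (by positivity)]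
    nlinarith [mul_le_mul_of_nonneg_left hm (sq_nonneg ε), e2, pow_pos hε 2]
  linarith
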